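/- Let F be a field of characteristic zero, A = F[x,y], n > 1. Define d¹(a) = (y^n·∂a/∂y, −y^{n-1}·∂a/∂x) and d²(a,b) = y^{n-1}(∂a/∂x + y·∂b/∂y) − (n−1)·y^{n-1}·b. Then the first logarithmic Poisson cohomology Ker(d²)/Im(d¹) is isomorphic as an F-vector space to μ(⊕_{i=0}^{n-2} y^i F[x]) ⊕ (F_{n-1}[y] × 0), where F_{n-1}[y] is the space of polynomials in y of degree ≤ n−1 and μ(b) = (∫((n−1)b − y·∂b/∂y)dx, b). In particular, Ker(d²) = μ(⊕_{i=0}^{n-2} y^i F[x]) ⊕ (F_{n-1}[y] × 0) ⊕ Im(d¹) as an internal direct sum. -/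

import Mathlib

open MvPolynomial

noncomputable section

abbrev PolyA (F : Type*) [Field F] := MvPolynomial (Fin 2) F

/-- Antiderivative in `x` with zero constant-in-`x` term. -/
def antiX (F : Type*) [Field F] : PolyA F →ₗ[F] PolyA F :=
  (Finsupp.lsum F fun m : Fin 2 →₀ ℕ =>
    (((m 0 : F) + 1)⁻¹) •
      (MvPolynomial.monomial (m + Finsupp.single 0 1) : F →ₗ[F] PolyA F))
    ∘ₗ (AddMonoidAlgebra.coeffLinearEquiv F : PolyA F ≃ₗ[F] ((Fin 2 →₀ ℕ) →₀ F)).toLinearMap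

/-- `μ(b) = (∫((n−1)b − y·∂b/∂y) dx, b)` as an `F`-linear map. -/
def mu (F : Type*) [Field F] (n : ℕ) : PolyA F →ₗ[F] PolyA F × PolyA F :=
  LinearMap.prod
    ((antiX F).comp
      (((n : F) - 1) • LinearMap.id -
        (LinearMap.mulLeft F (X 1)).comp (pderiv 1).toLinearMap))
    LinearMap.id

/-- `d¹(a) = (y^n·∂a/∂y, −y^{n-1}·∂a/∂x)` as an `F`-linear map. -/
def d1l (F : Type*) [Field F] (n : ℕ) : PolyA F →ₗ[F] PolyA F × PolyA F :=
  LinearMap.prod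
    ((LinearMap.mulLeft F ((X 1 : PolyA F) ^ n)).comp (pderiv 1).toLinearMap)
    (-((LinearMap.mulLeft F ((X 1 : PolyA F) ^ (n - 1))).comp (pderiv 0).toLinearMap))

/-- `d²(a,b) = y^{n-1}(∂a/∂x + y·∂b/∂y) − (n−1)·y^{n-1}·b` as an `F`-linear map. -/
def d2l (F : Type*) [Field F] (n : ℕ) : PolyA F × PolyA F →ₗ[F] PolyA F :=
  (LinearMap.mulLeft F ((X 1 : PolyA F) ^ (n - 1))).comp
    ((pderiv 0).toLinearMap.comp (LinearMap.fst F (PolyA F) (PolyA F)) +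
      (LinearMap.mulLeft F (X 1 : PolyA F)).comp
        ((pderiv 1).toLinearMap.comp (LinearMap.snd F (PolyA F) (PolyA F))) -
      ((n : F) - 1) • LinearMap.snd F (PolyA F) (PolyA F))

/-- `⊕_{i=0}^{n-2} y^i F[x]`, the subspace of polynomials of `y`-degree at most `n−2`. -/
def lowY (F : Type*) [Field F] (n : ℕ) : Submodule F (PolyA F) :=
  Submodule.span F
    ((fun q : ℕ × ℕ => (X 0 : PolyA F) ^ q.1 * X 1 ^ q.2) '' {q | q.2 ≤ n - 2})

/-- `F_{n-1}[y] × 0`, the polynomials in `y` of degree at most `n−1` in the first factor. -/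
def Fn1y (F : Type*) [Field F] (n : ℕ) : Submodule F (PolyA F × PolyA F) :=
  Submodule.map (LinearMap.inl F (PolyA F) (PolyA F))
    (Submodule.span F ((fun i : ℕ => (X 1 : PolyA F) ^ i) '' {i | i ≤ n - 1}))


set_option linter.unusedSectionVars false

namespace S16Pre
end S16Pre

namespace S16Hidden
end S16Hidden

namespace S16

variable {F : Type*} [Field F]

/-- the monomial exponent (i, j) -/
def Mn (i j : ℕ) : Fin 2 →₀ ℕ := Finsupp.single 0 i + Finsupp.single 1 j

def cf (p : PolyA F) (i j : ℕ) : F := coeff (Mn i j) p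

@[simp] lemma Mn_apply0 (i j : ℕ) : Mn i j 0 = i := by
  simp [Mn, Finsupp.single_apply]

@[simp] lemma Mn_apply1 (i j : ℕ) : Mn i j 1 = j := by
  simp [Mn, Finsupp.single_apply]

lemma eq_Mn (m : Fin 2 →₀ ℕ) : m = Mn (m 0) (m 1) := by
  ext a
  fin_cases a <;> simp [Mn, Finsupp.single_apply]

lemma Mn_inj {i j i' j' : ℕ} (h : Mn i j = Mn i' j') : i = i' ∧ j = j' := by
  constructor
  · have := congrArg (fun f => f 0) h; simpa using this
  · have := congrArg (fun f => f 1) h; simpa using this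

lemma Mn_add0 (i j : ℕ) : Mn i j + Finsupp.single 0 1 = Mn (i+1) j := by
  ext a; fin_cases a <;> simp [Mn, Finsupp.single_apply]

lemma Mn_add1 (i j t : ℕ) : Mn i j + Finsupp.single 1 t = Mn i (j+t) := by
  ext a; fin_cases a <;> simp [Mn, Finsupp.single_apply]

lemma Mn_sub1 (i j t : ℕ) : Mn i j - Finsupp.single 1 t = Mn i (j-t) := by
  ext a; fin_cases a <;> simp [Mn, Finsupp.single_apply, Finsupp.tsub_apply]

lemma cf_ext {p q : PolyA F} (h : ∀ i j, cf p i j = cf q i j) : p = q := by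
  apply MvPolynomial.ext
  intro m
  rw [eq_Mn m]
  exact h _ _

@[simp] lemma cf_add (p q : PolyA F) (i j : ℕ) : cf (p + q) i j = cf p i j + cf q i j := by
  simp [cf, coeff_add]

@[simp] lemma cf_zero (i j : ℕ) : cf (0 : PolyA F) i j = 0 := by simp [cf]

@[simp] lemma cf_neg (p : PolyA F) (i j : ℕ) : cf (-p) i j = - cf p i j := by
  simp [cf]

@[simp] lemma cf_sub (p q : PolyA F) (i j : ℕ) : cf (p - q) i j = cf p i j - cf q i j := by
  simp [cf, coeff_sub]

@[simp] lemma cf_smul (r : F) (p : PolyA F) (i j : ℕ) : cf (r • p) i j = r * cf p i j := by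
  simp [cf, coeff_smul]

end S16

def gl (F : Type*) [Field F] (w : (Fin 2 →₀ ℕ) → F) (σ : (Fin 2 →₀ ℕ) → (Fin 2 →₀ ℕ)) :
    PolyA F →ₗ[F] PolyA F :=
  (Finsupp.lsum F fun m => w m • (MvPolynomial.monomial (σ m) : F →ₗ[F] PolyA F))
    ∘ₗ (AddMonoidAlgebra.coeffLinearEquiv F : PolyA F ≃ₗ[F] ((Fin 2 →₀ ℕ) →₀ F)).toLinearMap

namespace S16
variable {F : Type*} [Field F]

lemma gl_apply (w : (Fin 2 →₀ ℕ) → F) (σ : (Fin 2 →₀ ℕ) → (Fin 2 →₀ ℕ)) (p : PolyA F) :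
    gl F w σ p = ∑ m ∈ p.support, w m • monomial (σ m) (coeff m p) := by
  rfl

lemma coeff_gl (w : (Fin 2 →₀ ℕ) → F) (σ : (Fin 2 →₀ ℕ) → (Fin 2 →₀ ℕ)) (p : PolyA F)
    (k τ : Fin 2 →₀ ℕ) (hτ : σ τ = k) (huniq : ∀ m, σ m = k → m ≠ τ → w m = 0) :
    coeff k (gl F w σ p) = w τ * coeff τ p := by
  rw [gl_apply, coeff_sum]
  have : ∀ m ∈ p.support,
      coeff k (w m • monomial (σ m) (coeff m p)) =
        if m = τ then w m * coeff m p else 0 := by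
    intro m _
    rw [coeff_smul, coeff_monomial]
    by_cases hm : m = τ
    · subst hm; rw [if_pos hτ, if_pos rfl, smul_eq_mul]
    · rw [if_neg hm]
      by_cases hσ : σ m = k
      · rw [if_pos hσ, huniq m hσ hm, zero_smul]
      · rw [if_neg hσ, smul_zero]
  rw [Finset.sum_congr rfl this, Finset.sum_ite_eq' p.support τ (fun m => w m * coeff m p)]
  by_cases hmem : τ ∈ p.support
  · rw [if_pos hmem]
  · rw [if_neg hmem, MvPolynomial.notMem_support_iff.mp hmem]; ring

lemma coeff_gl_zero (w : (Fin 2 →₀ ℕ) → F) (σ : (Fin 2 →₀ ℕ) → (Fin 2 →₀ ℕ)) (p : PolyA F)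
    (k : Fin 2 →₀ ℕ) (h : ∀ m, σ m = k → w m = 0) :
    coeff k (gl F w σ p) = 0 := by
  rw [gl_apply, coeff_sum]
  apply Finset.sum_eq_zero
  intro m _
  rw [coeff_smul, coeff_monomial]
  by_cases hσ : σ m = k
  · rw [if_pos hσ, h m hσ, zero_smul]
  · rw [if_neg hσ, smul_zero]

lemma coeff_pderiv (s : Fin 2) (p : PolyA F) (k : Fin 2 →₀ ℕ) :
    coeff k (pderiv s p) = ((k s : F) + 1) * coeff (k + Finsupp.single s 1) p := by
  induction p using MvPolynomial.induction_on' with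
  | monomial m a =>
    rw [pderiv_monomial, coeff_monomial, coeff_monomial]
    by_cases h0 : m s = 0
    · have h1 : m ≠ k + Finsupp.single s 1 := by
        intro hc
        have := congrArg (fun f => f s) hc
        simp [h0, Finsupp.single_apply] at this
      rw [if_neg h1, mul_zero]
      split <;> simp [h0]
    · obtain ⟨t, ht⟩ := Nat.exists_eq_succ_of_ne_zero h0
      have hiff : m - Finsupp.single s 1 = k ↔ m = k + Finsupp.single s 1 := by
        constructor
        · intro he
          rw [← he]; ext a
          rcases eq_or_ne a s with rfl | ha
          · simp [Finsupp.tsub_apply, Finsupp.single_apply, ht]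
          · simp [Finsupp.tsub_apply, Finsupp.single_apply, ha, Ne.symm ha]
        · intro he
          rw [he]; ext a
          rcases eq_or_ne a s with rfl | ha
          · simp [Finsupp.tsub_apply, Finsupp.single_apply]
          · simp [Finsupp.tsub_apply, Finsupp.single_apply, ha, Ne.symm ha]
      by_cases he : m - Finsupp.single s 1 = k
      · have hk := hiff.mp he
        rw [if_pos he, if_pos hk]
        have hks : k s = t := by
          have := congrArg (fun f => f s) hk
          simp [Finsupp.single_apply, ht] at this
          omega
        rw [ht, hks]
        push_cast; ring
      · rw [if_neg he, if_neg (fun hc => he (hiff.mpr hc))]; ring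
  | add p q hp hq =>
    rw [map_add, coeff_add, coeff_add, hp, hq]; ring

lemma cf_pderiv0 (p : PolyA F) (i j : ℕ) :
    cf (pderiv 0 p) i j = ((i : F) + 1) * cf p (i+1) j := by
  rw [cf, cf, coeff_pderiv, Mn_add0, Mn_apply0]

lemma cf_pderiv1 (p : PolyA F) (i j : ℕ) :
    cf (pderiv 1 p) i j = ((j : F) + 1) * cf p i (j+1) := by
  rw [cf, cf, coeff_pderiv, Mn_add1, Mn_apply1]

end S16
namespace S16
variable {F : Type*} [Field F]

lemma cf_X1pow_mul (t : ℕ) (p : PolyA F) (i j : ℕ) :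
    cf ((X 1 : PolyA F) ^ t * p) i j = if t ≤ j then cf p i (j - t) else 0 := by
  rw [cf, X_pow_eq_monomial, coeff_monomial_mul']
  have hle : Finsupp.single (1 : Fin 2) t ≤ Mn i j ↔ t ≤ j := by
    rw [Finsupp.single_le_iff, Mn_apply1]
  by_cases h : t ≤ j
  · rw [if_pos (hle.mpr h), if_pos h, Mn_sub1, one_mul, cf]
  · rw [if_neg (fun hc => h (hle.mp hc)), if_neg h]

lemma cf_X1_pderiv1 (b : PolyA F) (i j : ℕ) :
    cf ((X 1 : PolyA F) * pderiv 1 b) i j = (j : F) * cf b i j := by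
  have : (X 1 : PolyA F) * pderiv 1 b = (X 1 : PolyA F) ^ 1 * pderiv 1 b := by
    rw [pow_one]
  rw [this, cf_X1pow_mul]
  cases j with
  | zero => simp
  | succ t =>
    rw [if_pos (by omega), Nat.add_sub_cancel, cf_pderiv1]
    push_cast; ring

lemma antiX_eq_gl : antiX F = gl F (fun m => ((m 0 : F) + 1)⁻¹) (fun m => m + Finsupp.single 0 1) := rfl

lemma cf_antiX_succ [CharZero F] (p : PolyA F) (i j : ℕ) :
    cf (antiX F p) (i+1) j = ((i : F) + 1)⁻¹ * cf p i j := by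
  rw [antiX_eq_gl, cf, cf]
  rw [coeff_gl _ _ _ _ (Mn i j) (Mn_add0 i j)]
  · rw [Mn_apply0]
  · intro m hm _
    exfalso
    have : m = Mn i j := by
      apply add_right_cancel (b := Finsupp.single (0 : Fin 2) 1)
      rw [hm, Mn_add0]
    exact (by simp_all : ¬True) trivial

lemma cf_antiX_zero (p : PolyA F) (j : ℕ) :
    cf (antiX F p) 0 j = 0 := by
  rw [antiX_eq_gl, cf, coeff_gl_zero]
  intro m hm
  exfalso
  have := congrArg (fun f => f (0 : Fin 2)) hm
  simp [Finsupp.single_apply] at this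

end S16
namespace S16
variable {F : Type*} [Field F]

lemma mu_apply (n : ℕ) (b : PolyA F) :
    mu F n b = (antiX F (((n : F) - 1) • b - (X 1 : PolyA F) * pderiv 1 b), b) := by
  simp [mu, LinearMap.prod_apply, LinearMap.mulLeft_apply]

lemma d1l_apply (n : ℕ) (c : PolyA F) :
    d1l F n c = ((X 1 : PolyA F) ^ n * pderiv 1 c, -((X 1 : PolyA F) ^ (n-1) * pderiv 0 c)) := by
  simp [d1l, LinearMap.prod_apply, LinearMap.mulLeft_apply]

lemma d2l_apply (n : ℕ) (a b : PolyA F) :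
    d2l F n (a, b) =
      (X 1 : PolyA F) ^ (n-1) *
        (pderiv 0 a + (X 1 : PolyA F) * pderiv 1 b - ((n : F) - 1) • b) := by
  simp [d2l, LinearMap.mulLeft_apply]

lemma mem_ker_d2 [CharZero F] (d : ℕ) (a b : PolyA F) :
    d2l F (d+2) (a, b) = 0 ↔
      ∀ (i j : ℕ), ((i : F) + 1) * cf a (i+1) j = ((d : F) + 1 - (j : F)) * cf b i j := by
  rw [d2l_apply]
  have hX : ((X 1 : PolyA F) ^ (d+2-1)) ≠ 0 :=
    pow_ne_zero _ (MvPolynomial.X_ne_zero 1)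
  rw [mul_eq_zero, or_iff_right hX]
  constructor
  · intro h i j
    have := congrArg (fun q => cf q i j) h
    simp only [cf_add, cf_sub, cf_smul, cf_zero, cf_pderiv0, cf_X1_pderiv1] at this
    push_cast at this ⊢
    linear_combination this
  · intro h
    apply cf_ext
    intro i j
    simp only [cf_add, cf_sub, cf_smul, cf_zero, cf_pderiv0, cf_X1_pderiv1]
    have := h i j
    push_cast at this ⊢
    linear_combination this

end S16
def spanY (F : Type*) [Field F] (n : ℕ) : Submodule F (PolyA F) :=
  Submodule.span F ((fun i : ℕ => (X 1 : PolyA F) ^ i) '' {i | i ≤ n - 1})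

namespace S16
variable {F : Type*} [Field F]

lemma Fn1y_eq (n : ℕ) :
    Fn1y F n = Submodule.map (LinearMap.inl F (PolyA F) (PolyA F)) (spanY F n) := rfl

lemma Mn_zero_left (t : ℕ) : Mn 0 t = Finsupp.single 1 t := by
  simp [Mn]

lemma pow_mul_eq_monomial (i j : ℕ) :
    (X 0 : PolyA F) ^ i * (X 1 : PolyA F) ^ j = monomial (Mn i j) (1 : F) := by
  rw [X_pow_eq_monomial, X_pow_eq_monomial, monomial_mul, one_mul]
  rfl

lemma cf_monomial (i' j' i j : ℕ) (c : F) :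
    cf (monomial (Mn i' j') c) i j = if i' = i ∧ j' = j then c else 0 := by
  rw [cf, coeff_monomial]
  by_cases h : i' = i ∧ j' = j
  · obtain ⟨rfl, rfl⟩ := h
    rw [if_pos rfl, if_pos ⟨rfl, rfl⟩]
  · rw [if_neg h, if_neg (fun hc => h (Mn_inj hc))]

lemma mem_lowY_iff (d : ℕ) (p : PolyA F) :
    p ∈ lowY F (d+2) ↔ ∀ i j : ℕ, d + 1 ≤ j → cf p i j = 0 := by
  constructor
  · intro hp
    induction hp using Submodule.span_induction with
    | mem x hx =>
      obtain ⟨⟨q1, q2⟩, hq, rfl⟩ := hx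
      intro i j hj
      simp only [Set.mem_setOf_eq] at hq
      show cf ((X 0 : PolyA F) ^ q1 * (X 1 : PolyA F) ^ q2) i j = 0
      rw [pow_mul_eq_monomial, cf_monomial]
      rw [if_neg]
      rintro ⟨-, rfl⟩
      omega
    | zero => intro i j _; simp
    | add x y _ _ hx hy => intro i j hj; rw [cf_add, hx i j hj, hy i j hj, add_zero]
    | smul a x _ hx => intro i j hj; rw [cf_smul, hx i j hj, mul_zero]
  · intro h
    rw [as_sum p]
    apply Submodule.sum_mem
    intro v hv
    have hv1 : v 1 ≤ d := by
      by_contra hc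
      have := h (v 0) (v 1) (by omega)
      rw [cf, ← eq_Mn v] at this
      exact MvPolynomial.mem_support_iff.mp hv this
    have : monomial v (coeff v p) = coeff v p • ((X 0 : PolyA F) ^ (v 0) * (X 1 : PolyA F) ^ (v 1)) := by
      rw [pow_mul_eq_monomial, smul_monomial, smul_eq_mul, mul_one, ← eq_Mn v]
    rw [this]
    apply Submodule.smul_mem
    apply Submodule.subset_span
    exact ⟨(v 0, v 1), by simpa using hv1, rfl⟩

lemma mem_spanY_iff (d : ℕ) (p : PolyA F) :
    p ∈ spanY F (d+2) ↔ ∀ i j : ℕ, (i ≠ 0 ∨ d + 2 ≤ j) → cf p i j = 0 := by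
  constructor
  · intro hp
    induction hp using Submodule.span_induction with
    | mem x hx =>
      obtain ⟨q, hq, rfl⟩ := hx
      intro i j hj
      simp only [Set.mem_setOf_eq] at hq
      show cf ((X 1 : PolyA F) ^ q) i j = 0
      have : (X 1 : PolyA F) ^ q = (X 0 : PolyA F) ^ 0 * (X 1 : PolyA F) ^ q := by
        rw [pow_zero, one_mul]
      rw [this, pow_mul_eq_monomial, cf_monomial]
      rw [if_neg]
      rintro ⟨rfl, rfl⟩
      rcases hj with h | h
      · exact h rfl
      · omega
    | zero => intro i j _; simp
    | add x y _ _ hx hy => intro i j hj; rw [cf_add, hx i j hj, hy i j hj, add_zero]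
    | smul a x _ hx => intro i j hj; rw [cf_smul, hx i j hj, mul_zero]
  · intro h
    rw [as_sum p]
    apply Submodule.sum_mem
    intro v hv
    have hvne : coeff v p ≠ 0 := MvPolynomial.mem_support_iff.mp hv
    have hv0 : v 0 = 0 := by
      by_contra hc
      apply hvne
      have := h (v 0) (v 1) (Or.inl hc)
      rw [cf, ← eq_Mn v] at this
      exact this
    have hv1 : v 1 ≤ d + 1 := by
      by_contra hc
      have := h (v 0) (v 1) (Or.inr (by omega))
      rw [cf, ← eq_Mn v] at this
      exact hvne this
    have hveq : v = Finsupp.single 1 (v 1) := by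
      rw [eq_Mn v, hv0, Mn_zero_left]
      simp [Mn_apply1]
    have : monomial v (coeff v p) = coeff v p • ((X 1 : PolyA F) ^ (v 1)) := by
      rw [X_pow_eq_monomial, smul_monomial, smul_eq_mul, mul_one, ← hveq]
    rw [this]
    apply Submodule.smul_mem
    apply Submodule.subset_span
    exact ⟨v 1, by simpa using hv1, rfl⟩

end S16
namespace S16
variable {F : Type*} [Field F]

lemma dsub : ∀ d : ℕ, d + 2 - 1 = d + 1 := fun _ => rfl

lemma d1l_apply' (d : ℕ) (c : PolyA F) :
    d1l F (d+2) c =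
      ((X 1 : PolyA F) ^ (d+2) * pderiv 1 c, -((X 1 : PolyA F) ^ (d+1) * pderiv 0 c)) := by
  rw [d1l_apply, dsub]

lemma uniq [CharZero F] (d : ℕ) (b₀ p c : PolyA F)
    (hb₀ : b₀ ∈ lowY F (d+2)) (hp : p ∈ spanY F (d+2))
    (h : mu F (d+2) b₀ + ((p, 0) : PolyA F × PolyA F) + d1l F (d+2) c = 0) :
    mu F (d+2) b₀ = 0 ∧ ((p, 0) : PolyA F × PolyA F) = 0 ∧ d1l F (d+2) c = 0 := by
  rw [mu_apply, d1l_apply'] at h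
  have h1 := congrArg Prod.fst h
  have h2 := congrArg Prod.snd h
  simp only [Prod.fst_add, Prod.snd_add, Prod.fst_zero, Prod.snd_zero] at h1 h2
  have hb0cf := (mem_lowY_iff d b₀).mp hb₀
  have hpcf := (mem_spanY_iff d p).mp hp
  -- b₀ = 0
  have hb0 : b₀ = 0 := by
    apply cf_ext
    intro i j
    rw [cf_zero]
    by_cases hj : d + 1 ≤ j
    · exact hb0cf i j hj
    · have := congrArg (fun q => cf q i j) h2
      simp only [cf_add, cf_neg, cf_zero, cf_X1pow_mul] at this
      rw [if_neg hj] at this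
      linear_combination this
  -- p = 0
  have hpz : p = 0 := by
    apply cf_ext
    intro i j
    rw [cf_zero]
    rcases Nat.eq_zero_or_pos i with rfl | hi
    · by_cases hj : d + 2 ≤ j
      · exact hpcf 0 j (Or.inr hj)
      · have := congrArg (fun q => cf q 0 j) h1
        simp only [cf_add, cf_zero, cf_X1pow_mul, cf_antiX_zero, if_neg hj] at this
        linear_combination this
    · exact hpcf i j (Or.inl (by omega))
  subst hb0 hpz
  refine ⟨by simp, by simp, ?_⟩
  have hz : mu F (d+2) (0 : PolyA F) = 0 := map_zero _
  rw [mu_apply] at hz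
  rw [hz] at h
  simpa [d1l_apply'] using h

end S16
namespace S16
variable {F : Type*} [Field F]

lemma decomp [CharZero F] (d : ℕ) (a b : PolyA F)
    (H : ∀ (i j : ℕ), ((i : F) + 1) * cf a (i+1) j = ((d : F) + 1 - (j : F)) * cf b i j) :
    ∃ b₀ ∈ lowY F (d+2), ∃ p ∈ spanY F (d+2), ∃ c : PolyA F,
      (a, b) = mu F (d+2) b₀ + ((p, 0) : PolyA F × PolyA F) + d1l F (d+2) c := by
  set b₀ : PolyA F := gl F (fun m => if m 1 ≤ d then 1 else 0) id b with hb₀def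
  set bt : PolyA F :=
    gl F (fun m => if d+1 ≤ m 1 then (1:F) else 0)
      (fun m => m - Finsupp.single 1 (d+1)) b with hbtdef
  set g : PolyA F :=
    gl F (fun m => if m 0 = 0 ∧ d+2 ≤ m 1 then (((m 1 : ℕ) : F) - (d : F) - 1)⁻¹ else (0:F))
      (fun m => Finsupp.single 1 (m 1 - (d+1))) a with hgdef
  set p : PolyA F := gl F (fun m => if m 0 = 0 ∧ m 1 ≤ d+1 then (1:F) else 0) id a with hpdef
  set c : PolyA F := g - antiX F bt with hcdef
  -- coefficient descriptions
  have cfb₀ : ∀ i j : ℕ, cf b₀ i j = if j ≤ d then cf b i j else 0 := by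
    intro i j
    rw [hb₀def, cf,
      coeff_gl (fun m => if m 1 ≤ d then 1 else 0) id b (Mn i j) (Mn i j) rfl
        (fun m hm hne => absurd hm hne), Mn_apply1]
    split
    · rw [one_mul]; rfl
    · rw [zero_mul]
  have cfbt : ∀ i j : ℕ, cf bt i j = cf b i (j + (d+1)) := by
    intro i j
    have hτ : Mn i (j + (d+1)) - Finsupp.single 1 (d+1) = Mn i j := by
      rw [Mn_sub1]; congr 1; omega
    have huniq : ∀ m, m - Finsupp.single 1 (d+1) = Mn i j → m ≠ Mn i (j + (d+1)) →
        (if d+1 ≤ m 1 then (1:F) else 0) = 0 := by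
      intro m hm hne
      rw [if_neg]
      intro hle
      apply hne
      have hm' : Mn (m 0) (m 1 - (d+1)) = Mn i j := by
        rw [← Mn_sub1, ← eq_Mn m]; exact hm
      obtain ⟨h1, h2⟩ := Mn_inj hm'
      rw [eq_Mn m, h1, show m 1 = j + (d+1) by omega]
    rw [hbtdef, cf, coeff_gl _ _ b (Mn i j) (Mn i (j + (d+1))) hτ huniq]
    simp only [Mn_apply1]
    rw [if_pos (by omega), one_mul]
    rfl
  have cfg1 : ∀ i j : ℕ, cf g (i+1) j = 0 := by
    intro i j
    rw [hgdef, cf, coeff_gl_zero]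
    intro m hm
    exfalso
    have := congrArg (fun f => f (0 : Fin 2)) hm
    simp only [Finsupp.single_apply, Mn_apply0] at this
    simp at this
  have cfg2 : ∀ t : ℕ, cf g 0 (t+1) = ((t : F) + 1)⁻¹ * cf a 0 (t+d+2) := by
    intro t
    have hτ : Finsupp.single (1 : Fin 2) ((Mn 0 (t+d+2)) 1 - (d+1)) = Mn 0 (t+1) := by
      rw [Mn_apply1, Mn_zero_left]
      congr 1
      omega
    have huniq : ∀ m, Finsupp.single (1 : Fin 2) (m 1 - (d+1)) = Mn 0 (t+1) →
        m ≠ Mn 0 (t+d+2) →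
        (if m 0 = 0 ∧ d+2 ≤ m 1 then (((m 1 : ℕ) : F) - (d : F) - 1)⁻¹ else (0:F)) = 0 := by
      intro m hm hne
      rw [if_neg]
      rintro ⟨h0, h1⟩
      apply hne
      have h2 : m 1 - (d+1) = t+1 := by
        have := congrArg (fun f => f (1 : Fin 2)) hm
        simpa using this
      rw [eq_Mn m, h0, show m 1 = t+d+2 by omega]
    rw [hgdef, cf, coeff_gl _ _ a (Mn 0 (t+1)) (Mn 0 (t+d+2)) hτ huniq]
    have hcond : (Mn 0 (t+d+2)) 0 = 0 ∧ d+2 ≤ (Mn 0 (t+d+2)) 1 := by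
      rw [Mn_apply0, Mn_apply1]; omega
    rw [if_pos hcond, Mn_apply1]
    have hcast : (((t+d+2 : ℕ) : F)) - (d : F) - 1 = (t : F) + 1 := by push_cast; ring
    rw [hcast]
    rfl
  have cfp : ∀ i j : ℕ, cf p i j = if i = 0 ∧ j ≤ d+1 then cf a i j else 0 := by
    intro i j
    rw [hpdef, cf,
      coeff_gl (fun m => if m 0 = 0 ∧ m 1 ≤ d+1 then (1:F) else 0) id a (Mn i j) (Mn i j) rfl
        (fun m hm hne => absurd hm hne), Mn_apply0, Mn_apply1]
    split
    · rw [one_mul]; rfl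
    · rw [zero_mul]
  have cfc1 : ∀ i j : ℕ, cf c (i+1) j = -(((i : F) + 1)⁻¹ * cf b i (j + (d+1))) := by
    intro i j
    rw [hcdef, cf_sub, cfg1, cf_antiX_succ, cfbt]
    ring
  have cfc0 : ∀ t : ℕ, cf c 0 (t+1) = ((t : F) + 1)⁻¹ * cf a 0 (t+d+2) := by
    intro t
    rw [hcdef, cf_sub, cfg2, cf_antiX_zero]
    ring
  -- memberships
  have hb₀mem : b₀ ∈ lowY F (d+2) := by
    rw [mem_lowY_iff]
    intro i j hj
    rw [cfb₀, if_neg (by omega)]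
  have hpmem : p ∈ spanY F (d+2) := by
    rw [mem_spanY_iff]
    intro i j hij
    rw [cfp, if_neg]
    rintro ⟨rfl, hj⟩
    rcases hij with h | h
    · exact h rfl
    · omega
  refine ⟨b₀, hb₀mem, p, hpmem, c, ?_⟩
  rw [mu_apply, d1l_apply', Prod.mk_add_mk, Prod.mk_add_mk, Prod.mk.injEq]
  constructor
  · -- first components
    apply cf_ext
    intro i j
    rcases i with _ | i
    · simp only [cf_add, cf_antiX_zero, cfp, cf_X1pow_mul]
      by_cases hj : d+2 ≤ j
      · rw [if_neg (by omega), if_pos hj]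
        obtain ⟨t, rfl⟩ : ∃ t : ℕ, j = t+d+2 := ⟨j - (d+2), by omega⟩
        rw [show t+d+2 - (d+2) = t by omega, cf_pderiv1, cfc0]
        have hne : ((t : F) + 1) ≠ 0 := Nat.cast_add_one_ne_zero t
        field_simp
        ring
      · rw [if_pos ⟨trivial, by omega⟩, if_neg hj]
        ring
    · have hne : ((i : F) + 1) ≠ 0 := Nat.cast_add_one_ne_zero i
      apply mul_left_cancel₀ hne
      rw [H i j]
      have hT : cf (antiX F ((((d+2 : ℕ) : F) - 1) • b₀ - (X 1 : PolyA F) * pderiv 1 b₀)) (i+1) j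
          = ((i : F) + 1)⁻¹ * (((d : F) + 1 - (j : F)) * (if j ≤ d then cf b i j else 0)) := by
        rw [cf_antiX_succ, cf_sub, cf_smul, cf_X1_pderiv1, cfb₀]
        push_cast
        ring
      have hC : cf ((X 1 : PolyA F) ^ (d+2) * pderiv 1 c) (i+1) j
          = if d+2 ≤ j then -(((i : F) + 1)⁻¹ * (((j : F) - (d : F) - 1) * cf b i j)) else 0 := by
        rw [cf_X1pow_mul]
        by_cases hj : d+2 ≤ j
        · rw [if_pos hj, if_pos hj, cf_pderiv1, cfc1, show j - (d+2) + 1 + (d+1) = j by omega]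
          rw [show ((j - (d+2) : ℕ) : F) = (j : F) - (d : F) - 2 by
            rw [Nat.cast_sub hj]; push_cast; ring]
          ring
        · rw [if_neg hj, if_neg hj]
      simp only [cf_add, hT, hC, cfp, if_neg (show ¬(i+1 = 0 ∧ j ≤ d+1) by omega)]
      split_ifs with h1 h2
      · omega
      · field_simp
        ring
      · field_simp; ring
      · have hj : (j : F) = (d : F) + 1 := by
          have : j = d+1 := by omega
          rw [this]; push_cast; ring
        rw [hj]; ring
  · -- second components
    apply cf_ext
    intro i j
    simp only [cf_add, cf_neg, cf_zero, cfb₀, cf_X1pow_mul]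
    by_cases hj : d+1 ≤ j
    · rw [if_neg (by omega), if_pos hj, cf_pderiv0, cfc1, show j - (d+1) + (d+1) = j by omega]
      have hne : ((i : F) + 1) ≠ 0 := Nat.cast_add_one_ne_zero i
      field_simp
      ring
    · rw [if_pos (by omega), if_neg hj]
      ring

end S16

namespace S16
variable {F : Type*} [Field F] [CharZero F]

lemma inl_pair (p : PolyA F) :
    (LinearMap.inl F (PolyA F) (PolyA F)) p = ((p, 0) : PolyA F × PolyA F) := rfl

lemma mu_mem_ker (d : ℕ) (b₀ : PolyA F) :
    mu F (d+2) b₀ ∈ LinearMap.ker (d2l F (d+2)) := by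
  rw [LinearMap.mem_ker, mu_apply, mem_ker_d2]
  intro i j
  rw [cf_antiX_succ, cf_sub, cf_smul, cf_X1_pderiv1]
  have hne : ((i : F) + 1) ≠ 0 := Nat.cast_add_one_ne_zero i
  field_simp
  push_cast
  ring

lemma pair_mem_ker (d : ℕ) (p : PolyA F) (hp : p ∈ spanY F (d+2)) :
    ((p, 0) : PolyA F × PolyA F) ∈ LinearMap.ker (d2l F (d+2)) := by
  rw [LinearMap.mem_ker, mem_ker_d2]
  intro i j
  rw [(mem_spanY_iff d p).mp hp (i+1) j (Or.inl (by omega)), cf_zero]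
  ring

lemma d1l_mem_ker (d : ℕ) (c : PolyA F) :
    d1l F (d+2) c ∈ LinearMap.ker (d2l F (d+2)) := by
  rw [LinearMap.mem_ker, d1l_apply', mem_ker_d2]
  intro i j
  rw [cf_X1pow_mul, cf_neg, cf_X1pow_mul]
  by_cases hj2 : d+2 ≤ j
  · rw [if_pos hj2, if_pos (by omega : d+1 ≤ j), cf_pderiv1, cf_pderiv0,
      show j - (d+2) + 1 = j - (d+1) by omega,
      Nat.cast_sub hj2]
    push_cast
    ring
  · rw [if_neg hj2]
    by_cases hj1 : d+1 ≤ j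
    · have hj : j = d+1 := by omega
      subst hj
      rw [if_pos hj1]
      push_cast
      ring
    · rw [if_neg hj1]
      ring

theorem main (d : ℕ) :
    (Submodule.map (mu F (d+2)) (lowY F (d+2)) ⊓
        (Fn1y F (d+2) ⊔ LinearMap.range (d1l F (d+2))) = ⊥) ∧
    (Fn1y F (d+2) ⊓ (Submodule.map (mu F (d+2)) (lowY F (d+2)) ⊔
        LinearMap.range (d1l F (d+2))) = ⊥) ∧
    (LinearMap.range (d1l F (d+2)) ⊓ (Submodule.map (mu F (d+2)) (lowY F (d+2)) ⊔
        Fn1y F (d+2)) = ⊥) ∧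
    (Submodule.map (mu F (d+2)) (lowY F (d+2)) ⊔ Fn1y F (d+2) ⊔
        LinearMap.range (d1l F (d+2)) = LinearMap.ker (d2l F (d+2))) ∧
    Nonempty
      ((↥(LinearMap.ker (d2l F (d+2))) ⧸
          Submodule.comap (LinearMap.ker (d2l F (d+2))).subtype
            (LinearMap.range (d1l F (d+2))))
        ≃ₗ[F] ↥(Submodule.map (mu F (d+2)) (lowY F (d+2)) ⊔ Fn1y F (d+2))) := by
  have g1 : Submodule.map (mu F (d+2)) (lowY F (d+2)) ⊓
      (Fn1y F (d+2) ⊔ LinearMap.range (d1l F (d+2))) = ⊥ := by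
    rw [eq_bot_iff]
    rintro x hx
    rw [Submodule.mem_inf] at hx
    obtain ⟨hxM, hxFR⟩ := hx
    obtain ⟨b₀, hb₀, rfl⟩ := hxM
    rw [Submodule.mem_sup] at hxFR
    obtain ⟨y, hy, z, hz, hsum⟩ := hxFR
    rw [Fn1y_eq] at hy
    obtain ⟨p, hp, rfl⟩ := hy
    obtain ⟨c, rfl⟩ := hz
    rw [inl_pair] at hsum
    have heq : mu F (d+2) b₀ + ((-p, 0) : PolyA F × PolyA F) + d1l F (d+2) (-c) = 0 := by
      rw [map_neg, show ((-p, (0:PolyA F)) : PolyA F × PolyA F) = -((p, 0)) by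
        rw [Prod.neg_mk, neg_zero], ← hsum]
      abel
    rw [Submodule.mem_bot]
    exact (uniq d b₀ (-p) (-c) hb₀ (Submodule.neg_mem _ hp) heq).1
  have g2 : Fn1y F (d+2) ⊓ (Submodule.map (mu F (d+2)) (lowY F (d+2)) ⊔
      LinearMap.range (d1l F (d+2))) = ⊥ := by
    rw [eq_bot_iff]
    rintro x hx
    rw [Submodule.mem_inf] at hx
    obtain ⟨hxF, hxMR⟩ := hx
    rw [Fn1y_eq] at hxF
    obtain ⟨p, hp, rfl⟩ := hxF
    rw [Submodule.mem_sup] at hxMR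
    obtain ⟨y, hy, z, hz, hsum⟩ := hxMR
    obtain ⟨b₀, hb₀, rfl⟩ := hy
    obtain ⟨c, rfl⟩ := hz
    rw [inl_pair] at hsum
    have heq : mu F (d+2) b₀ + ((-p, 0) : PolyA F × PolyA F) + d1l F (d+2) c = 0 := by
      rw [show ((-p, (0:PolyA F)) : PolyA F × PolyA F) = -((p, 0)) by
        rw [Prod.neg_mk, neg_zero], ← hsum]
      abel
    have h0 := (uniq d b₀ (-p) c hb₀ (Submodule.neg_mem _ hp) heq).2.1
    have hp0 : p = 0 := by
      have := congrArg Prod.fst h0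
      simpa [neg_eq_zero] using this
    rw [Submodule.mem_bot, inl_pair, hp0]
    rfl
  have g3 : LinearMap.range (d1l F (d+2)) ⊓ (Submodule.map (mu F (d+2)) (lowY F (d+2)) ⊔
      Fn1y F (d+2)) = ⊥ := by
    rw [eq_bot_iff]
    rintro x hx
    rw [Submodule.mem_inf] at hx
    obtain ⟨hxR, hxMF⟩ := hx
    obtain ⟨c, rfl⟩ := hxR
    rw [Submodule.mem_sup] at hxMF
    obtain ⟨y, hy, z, hz, hsum⟩ := hxMF
    obtain ⟨b₀, hb₀, rfl⟩ := hy
    rw [Fn1y_eq] at hz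
    obtain ⟨p, hp, rfl⟩ := hz
    rw [inl_pair] at hsum
    have heq : mu F (d+2) b₀ + ((p, 0) : PolyA F × PolyA F) + d1l F (d+2) (-c) = 0 := by
      rw [map_neg, ← hsum]
      abel
    have h0 := (uniq d b₀ p (-c) hb₀ hp heq).2.2
    rw [map_neg, neg_eq_zero] at h0
    rw [Submodule.mem_bot]
    exact h0
  have g4 : Submodule.map (mu F (d+2)) (lowY F (d+2)) ⊔ Fn1y F (d+2) ⊔
      LinearMap.range (d1l F (d+2)) = LinearMap.ker (d2l F (d+2)) := by
    apply le_antisymm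
    · apply sup_le (sup_le ?_ ?_) ?_
      · rintro x ⟨b₀, hb₀, rfl⟩
        exact mu_mem_ker d b₀
      · rintro x hx
        rw [Fn1y_eq] at hx
        obtain ⟨p, hp, rfl⟩ := hx
        rw [inl_pair]
        exact pair_mem_ker d p hp
      · rintro x ⟨c, rfl⟩
        exact d1l_mem_ker d c
    · rintro ⟨a, b⟩ hx
      rw [LinearMap.mem_ker, mem_ker_d2] at hx
      obtain ⟨b₀, hb₀, p, hp, c, heq⟩ := decomp d a b hx
      rw [heq]
      refine Submodule.add_mem _ (Submodule.add_mem _ ?_ ?_) ?_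
      · exact Submodule.mem_sup_left (Submodule.mem_sup_left ⟨b₀, hb₀, rfl⟩)
      · refine Submodule.mem_sup_left (Submodule.mem_sup_right ?_)
        rw [Fn1y_eq]
        exact ⟨p, hp, rfl⟩
      · exact Submodule.mem_sup_right ⟨c, rfl⟩
  refine ⟨g1, g2, g3, g4, ?_⟩
  set K := LinearMap.ker (d2l F (d+2)) with hK
  set N := Submodule.map (mu F (d+2)) (lowY F (d+2)) ⊔ Fn1y F (d+2) with hN
  set R := LinearMap.range (d1l F (d+2)) with hR
  have hNK : N ≤ K := by rw [← g4]; exact le_sup_left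
  have hRK : R ≤ K := by rw [← g4]; exact le_sup_right
  have hcompl : IsCompl (Submodule.comap K.subtype R) (Submodule.comap K.subtype N) := by
    constructor
    · rw [disjoint_iff, eq_bot_iff]
      rintro x hx
      rw [Submodule.mem_inf] at hx
      obtain ⟨hxR, hxN⟩ := hx
      have : (x : PolyA F × PolyA F) ∈ R ⊓ N := Submodule.mem_inf.mpr ⟨hxR, hxN⟩
      rw [g3] at this
      rw [Submodule.mem_bot] at this ⊢
      exact Subtype.ext this
    · rw [codisjoint_iff, eq_top_iff]
      rintro x -
      have hx : (x : PolyA F × PolyA F) ∈ N ⊔ R := by rw [g4]; exact x.2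
      rw [Submodule.mem_sup] at hx
      obtain ⟨y, hy, z, hz, hsum⟩ := hx
      rw [Submodule.mem_sup]
      refine ⟨⟨z, hRK hz⟩, hz, ⟨y, hNK hy⟩, hy, ?_⟩
      apply Subtype.ext
      show z + y = (x : PolyA F × PolyA F)
      rw [add_comm]
      exact hsum
  exact ⟨(Submodule.quotientEquivOfIsCompl _ _ hcompl).trans
    (Submodule.comapSubtypeEquivOfLe hNK)⟩

end S16

/-- `Ker d² = μ(⊕_{i=0}^{n-2} y^i F[x]) ⊕ (F_{n-1}[y] × 0) ⊕ Im d¹` as an internal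
direct sum, and consequently the first logarithmic Poisson cohomology
`Ker d²/Im d¹` is `F`-linearly isomorphic to `μ(⊕_{i=0}^{n-2} y^i F[x]) ⊕ (F_{n-1}[y] × 0)`. -/
theorem stmt16 (F : Type*) [Field F] [CharZero F] (n : ℕ) (hn : 1 < n) :
    (Submodule.map (mu F n) (lowY F n) ⊓ (Fn1y F n ⊔ LinearMap.range (d1l F n)) = ⊥) ∧
    (Fn1y F n ⊓ (Submodule.map (mu F n) (lowY F n) ⊔ LinearMap.range (d1l F n)) = ⊥) ∧
    (LinearMap.range (d1l F n) ⊓ (Submodule.map (mu F n) (lowY F n) ⊔ Fn1y F n) = ⊥) ∧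
    (Submodule.map (mu F n) (lowY F n) ⊔ Fn1y F n ⊔ LinearMap.range (d1l F n) =
      LinearMap.ker (d2l F n)) ∧
    Nonempty
      ((↥(LinearMap.ker (d2l F n)) ⧸
          Submodule.comap (LinearMap.ker (d2l F n)).subtype (LinearMap.range (d1l F n)))
        ≃ₗ[F] ↥(Submodule.map (mu F n) (lowY F n) ⊔ Fn1y F n)) := by
  obtain ⟨d, rfl⟩ : ∃ d, n = d + 2 := ⟨n - 2, by omega⟩
  exact S16.main d
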